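/- Low wavenumber refinement: there exists a constant c > 0 such that for all ε ∈ (0,1) and all k ∈ ℤ with 0 < |k| < 1/(2πε): m_ε^t(k) − |log ε|/(2π) ≤ c(1 + |log|k||) and m_ε^n(k) − |log ε|/(4π) ≤ c(1 + |log|k||); moreover m_ε^t(0) − |log ε|/(2π) = 0 and m_ε^n(0) − |log ε|/(4π) = 0. -/

import Mathlib

open scoped Real BigOperators
open MeasureTheory

noncomputable section

namespace Filament

/-- ℝ³. -/
abbrev V : Type := EuclideanSpace ℝ (Fin 3)
/-- ℂ³. -/
abbrev VC : Type := EuclideanSpace ℂ (Fin 3)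

/-- Fourier coefficient `ℱ[h](k) = ∫_𝕋 h(s) e^{2πiks} ds` of a (1-periodic) complex valued
function on the unit torus, viewed as a function on `ℝ`. -/
def fc (h : ℝ → ℂ) (k : ℤ) : ℂ :=
  ∫ s in (0:ℝ)..1, h s * Complex.exp (2 * (Real.pi : ℂ) * Complex.I * (k : ℂ) * (s : ℂ))

/-- Componentwise Fourier coefficient of an ℝ³-valued function. -/
def fcV (h : ℝ → V) (k : ℤ) : VC :=
  (WithLp.equiv 2 (Fin 3 → ℂ)).symm (fun i => fc (fun s => ((h s i : ℝ) : ℂ)) k)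

/-- Fourier coefficient of a real scalar function. -/
def fcR (h : ℝ → ℝ) (k : ℤ) : ℂ := fc (fun s => ((h s : ℝ) : ℂ)) k

/-- Squared inhomogeneous Sobolev norm `‖h‖_{H^σ}²`. -/
def HsqV (σ : ℝ) (h : ℝ → V) : ℝ := ∑' k : ℤ, (1 + (k:ℝ)^2) ^ σ * ‖fcV h k‖^2

/-- Sobolev norm `‖h‖_{H^σ}`. -/
def HnV (σ : ℝ) (h : ℝ → V) : ℝ := Real.sqrt (HsqV σ h)

/-- Squared inhomogeneous Sobolev norm of a scalar function. -/
def HsqR (σ : ℝ) (h : ℝ → ℝ) : ℝ := ∑' k : ℤ, (1 + (k:ℝ)^2) ^ σ * ‖fcR h k‖^2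

/-- Sobolev norm of a scalar function. -/
def HnR (σ : ℝ) (h : ℝ → ℝ) : ℝ := Real.sqrt (HsqR σ h)

/-- Squared homogeneous Sobolev seminorm `‖h‖_{Ḣ^σ}²` (the `k = 0` mode is omitted). -/
def HdotsqV (σ : ℝ) (h : ℝ → V) : ℝ :=
  ∑' k : {k : ℤ // k ≠ 0}, (|((k : ℤ) : ℝ)|) ^ (2*σ) * ‖fcV h k‖^2

/-- Homogeneous Sobolev seminorm `‖h‖_{Ḣ^σ}`. -/
def HdotV (σ : ℝ) (h : ℝ → V) : ℝ := Real.sqrt (HdotsqV σ h)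

/-- Membership `h ∈ H^σ(𝕋; ℝ³)`. -/
def MemHV (σ : ℝ) (h : ℝ → V) : Prop :=
  Summable (fun k : ℤ => (1 + (k:ℝ)^2) ^ σ * ‖fcV h k‖^2)

/-- Membership `h ∈ H^σ(𝕋; ℝ)`. -/
def MemHR (σ : ℝ) (h : ℝ → ℝ) : Prop :=
  Summable (fun k : ℤ => (1 + (k:ℝ)^2) ^ σ * ‖fcR h k‖^2)

/-- Modified Bessel function of the second kind of (integer) order `j`:
`K_j(x) = ∫₀^∞ e^{−x cosh t} cosh (j t) dt`. -/
def besselK (j : ℕ) (x : ℝ) : ℝ :=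
  ∫ t in Set.Ioi (0:ℝ), Real.exp (-x * Real.cosh t) * Real.cosh ((j : ℝ) * t)

/-- `|log ε|` for `0 < ε < 1`. -/
def logn (ε : ℝ) : ℝ := -Real.log ε

/-- The tangential slender body multiplier `m_ε^t`. -/
def mt (ε : ℝ) : ℤ → ℝ := fun k =>
  if k = 0 then logn ε / (2 * Real.pi) else
    let x := 2 * Real.pi * ε * |(k : ℝ)|
    let K0 := besselK 0 x
    let K1 := besselK 1 x
    (2*K0*K1 + x * (K0^2 - K1^2)) / (8 * Real.pi^2 * ε * |(k:ℝ)| * K1^2)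

/-- The normal slender body multiplier `m_ε^n`. -/
def mn (ε : ℝ) : ℤ → ℝ := fun k =>
  if k = 0 then logn ε / (4 * Real.pi) else
    let x := 2 * Real.pi * ε * |(k : ℝ)|
    let K0 := besselK 0 x
    let K1 := besselK 1 x
    let K2 := besselK 2 x
    (2*K0*K1*K2 + x * (K1^2*(K0+K2) - 2*K0^2*K2))
      / (4 * Real.pi^2 * ε * |(k:ℝ)| * (4*K1^2*K2 + x * K1 * (K1^2 - K0*K2)))

/-- Fourier multiplier operator with symbol `m`, on complex scalar functions:
`(T_m h)(s) = Σ_k m(k) ℱ[h](k) e^{−2πiks}`. -/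
def TmC (m : ℤ → ℝ) (h : ℝ → ℂ) : ℝ → ℂ :=
  fun s => ∑' k : ℤ, (m k : ℂ) * fc h k *
    Complex.exp (-(2 * (Real.pi : ℂ) * Complex.I * (k : ℂ) * (s : ℂ)))

/-- Fourier multiplier operator with (real) symbol `m` acting componentwise on ℝ³-valued
functions. -/
def Tm (m : ℤ → ℝ) (h : ℝ → V) : ℝ → V :=
  fun s => (WithLp.equiv 2 (Fin 3 → ℝ)).symm
    (fun i => (TmC m (fun t => ((h t i : ℝ) : ℂ)) s).re)

/-- Euclidean dot product on ℝ³. -/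
def dotV (x y : V) : ℝ := ∑ i, x i * y i

/-- `a · conj b` for `a b : ℂ³`. -/
def fdot (a b : VC) : ℂ := ∑ i, a i * (starRingEnd ℂ) (b i)

/-- Tangential projection `P_{u} h = (u·h) u` (with `u = X_s`). -/
def Ptan (u h : ℝ → V) : ℝ → V := fun s => dotV (u s) (h s) • u s

/-- Normal projection `P⊥_{u} h = h − (u·h) u`. -/
def Pperp (u h : ℝ → V) : ℝ → V := fun s => h s - Ptan u h s

/-- The force-to-velocity map `ℒ̄_ε` along a curve with unit tangent `u = X_s`. -/
def Leps (ε : ℝ) (u f : ℝ → V) : ℝ → V :=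
  fun s => Ptan u (Tm (mt ε) (Ptan u f)) s + Pperp u (Tm (mn ε) (Pperp u f)) s

/-- A (1-periodic) curve of Sobolev regularity `σ` parametrized by arclength:
`X ∈ H^σ(𝕋;ℝ³)` with `|X_s| = 1` a.e. -/
structure IsCurve (σ : ℝ) (X : ℝ → V) : Prop where
  periodic : Function.Periodic X 1
  mem : MemHV σ X
  unit : ∀ᵐ s : ℝ, ‖deriv X s‖ = 1

/-- The tangential part `(X_s · X_ssss) X_s` of `X_ssss`. -/
def tangential4 (X : ℝ → V) : ℝ → V :=
  fun s => dotV (deriv X s) (iteratedDeriv 4 X s) • deriv X s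

/-- `τ` is a weak solution of the tension equation
`(ℒ̄_ε[(τX_s)_s])_s·X_s = (ℒ̄_ε[X_ssss])_s·X_s`. -/
def WeakTension (ε : ℝ) (X : ℝ → V) (τ : ℝ → ℝ) : Prop :=
  ∀ φ : ℝ → ℝ, Function.Periodic φ 1 → MemHR 1 φ →
    (∑' k : ℤ,
      ((mt ε k : ℂ) * fdot (fcV (fun s => deriv φ s • deriv X s) k)
          (fcV (fun s => deriv τ s • deriv X s) k)
        + (mn ε k : ℂ) * fdot (fcV (fun s => φ s • iteratedDeriv 2 X s) k)
          (fcV (fun s => τ s • iteratedDeriv 2 X s) k)))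
    = ∑' k : ℤ,
      ((mt ε k : ℂ) * fdot (fcV (fun s => deriv φ s • deriv X s) k) (fcV (tangential4 X) k)
        + (mn ε k : ℂ) * fdot (fcV (fun s => φ s • iteratedDeriv 2 X s) k)
          (fcV (Pperp (deriv X) (iteratedDeriv 4 X)) k))

/-- The remainder `R[X] = ℒ̄_ε[∂_s⁴X] − T_{m_ε^n}(∂_s⁴X)`. -/
def Rop (ε : ℝ) (X : ℝ → V) : ℝ → V :=
  fun s => Leps ε (deriv X) (iteratedDeriv 4 X) s - Tm (mn ε) (iteratedDeriv 4 X) s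

/-- `ℒ̄_ε[(τ X_s)_s] = P_{X_s} T_{m_ε^t}(τ_s X_s) + P⊥_{X_s} T_{m_ε^n}(τ X_ss)`. -/
def tensionForce (ε : ℝ) (X : ℝ → V) (τ : ℝ → ℝ) : ℝ → V :=
  fun s => Ptan (deriv X) (Tm (mt ε) (fun r => deriv τ r • deriv X r)) s
         + Pperp (deriv X) (Tm (mn ε) (fun r => τ r • iteratedDeriv 2 X r)) s

/-- The symbol `λ_k = m_ε^n(k) (2πk)⁴` of `A = T_{m_ε^n} ∂_s⁴`. -/
def lamb (ε : ℝ) (k : ℤ) : ℝ := mn ε k * (2 * Real.pi * (k:ℝ))^4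

/-- The semigroup `e^{−t a A}`, i.e. the multiplier with symbol `e^{−a λ_k t}`
(`a` is a time-rescaling factor; `a = 1` is the unrescaled evolution). -/
def heat (ε a t : ℝ) (h : ℝ → V) : ℝ → V :=
  Tm (fun k => Real.exp (-(a * lamb ε k) * t)) h

/-- `X` is a solution on `[0,T]` of the (time-rescaled by `a`) filament evolution
`∂ₜX = −a ℒ̄_ε[(X_sss − τX_s)_s]`, `|X_s|² = 1`, with initial data `X0` and tension field `τ`,
in the mild (Duhamel) formulation, belonging to `C([0,T];H²) ∩ L²([0,T];H^{7/2})`. -/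
structure IsSolutionOn (ε a T : ℝ) (X0 : ℝ → V) (X : ℝ → ℝ → V) (τ : ℝ → ℝ → ℝ) : Prop where
  curve : ∀ t ∈ Set.Icc (0:ℝ) T, IsCurve 2 (X t)
  contH2 : ∀ t ∈ Set.Icc (0:ℝ) T, ∀ δ > (0:ℝ), ∃ η > (0:ℝ), ∀ t' ∈ Set.Icc (0:ℝ) T,
      |t' - t| < η → HnV 2 (fun s => X t' s - X t s) < δ
  l2H : IntegrableOn (fun t => HsqV (7/2) (X t)) (Set.Icc 0 T)
  init : X 0 = X0
  tension : ∀ᵐ r ∂(volume.restrict (Set.Icc (0:ℝ) T)),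
      Function.Periodic (τ r) 1 ∧ MemHR (1/2) (τ r) ∧ WeakTension ε (X r) (τ r)
  duhamel : ∀ t ∈ Set.Icc (0:ℝ) T, ∀ s : ℝ,
      X t s = heat ε a t X0 s
        + ∫ r in (0:ℝ)..t,
            (heat ε a (t - r)
              (fun y => a • (tensionForce ε (X r) (τ r) y - Rop ε (X r) y))) s

/-- `(I + u ⊗ u) w`. -/
def rftApply (u w : ℝ → V) : ℝ → V := fun s => w s + dotV (u s) (w s) • u s

/-- `Y` is a solution on `[0,T]` of the time-rescaled resistive force theory evolution
`∂ₜY = −(1/(4π))(I + Y_s⊗Y_s)(Y_sss − τ_Y Y_s)_s`, `|Y_s| = 1`, with initial data `X0` and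
RFT tension `τY`, belonging to `C([0,T];H⁴) ∩ L²([0,T];H⁶)`. -/
structure IsRFTSolutionOn (T : ℝ) (X0 : ℝ → V) (Y : ℝ → ℝ → V) (τY : ℝ → ℝ → ℝ) : Prop where
  curve : ∀ t ∈ Set.Icc (0:ℝ) T, Function.Periodic (Y t) 1 ∧ MemHV 4 (Y t) ∧
      (∀ᵐ s : ℝ, ‖deriv (Y t) s‖ = 1)
  contH4 : ∀ t ∈ Set.Icc (0:ℝ) T, ∀ δ > (0:ℝ), ∃ η > (0:ℝ), ∀ t' ∈ Set.Icc (0:ℝ) T,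
      |t' - t| < η → HnV 4 (fun s => Y t' s - Y t s) < δ
  l2H : IntegrableOn (fun t => HsqV 6 (Y t)) (Set.Icc 0 T)
  init : Y 0 = X0
  tension : ∀ t ∈ Set.Icc (0:ℝ) T, Function.Periodic (τY t) 1 ∧ MemHR 1 (τY t) ∧
      ∀ s : ℝ,
        dotV (deriv (rftApply (deriv (Y t))
            (fun x => deriv (fun y => τY t y • deriv (Y t) y) x)) s) (deriv (Y t) s)
        = dotV (deriv (rftApply (deriv (Y t)) (iteratedDeriv 4 (Y t))) s) (deriv (Y t) s)
  evol : ∀ t ∈ Set.Icc (0:ℝ) T, ∀ s : ℝ,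
      HasDerivAt (fun r => Y r s)
        (-((1/(4*Real.pi)) • rftApply (deriv (Y t))
            (fun x => deriv (fun y => iteratedDeriv 3 (Y t) y - τY t y • deriv (Y t) y) x) s)) t



section BesselLemmas
open Real Set Filter Topology

lemma cosh_ge_half_exp (t : ℝ) : Real.exp t / 2 ≤ Real.cosh t := by
  rw [Real.cosh_eq]
  have := (Real.exp_pos (-t)).le
  linarith

lemma cosh_le_exp_of_nonneg {t : ℝ} (ht : 0 ≤ t) : Real.cosh t ≤ Real.exp t := by
  rw [Real.cosh_eq]
  have h := Real.exp_le_exp.2 (neg_le_self ht)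
  linarith

lemma key_exp_ineq {x t : ℝ} (hx : 0 < x) :
    3 * t ≤ x / 2 * Real.exp t + 3 * Real.log (6 / x) - 3 := by
  have h6 : (0:ℝ) < 6 / x := by positivity
  have h := Real.add_one_le_exp (t - Real.log (6 / x))
  rw [Real.exp_sub, Real.exp_log h6] at h
  have hexp : 0 < Real.exp t := Real.exp_pos t
  have h' : 3 * ((t - Real.log (6/x)) + 1) ≤ 3 * (Real.exp t / (6 / x)) := by linarith
  have heq : 3 * (Real.exp t / (6 / x)) = x / 2 * Real.exp t := by
    field_simp; ring
  linarith [heq ▸ h']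

lemma besselK_integrand_bound {x c : ℝ} (hx : 0 < x) (hc : 0 ≤ c) (hc2 : c ≤ 2)
    {t : ℝ} (ht : 0 ≤ t) :
    Real.exp (-x * Real.cosh t) * Real.cosh (c * t)
      ≤ Real.exp (3 * Real.log (6 / x) - 3) * Real.exp (-t) := by
  have h1 : Real.cosh (c * t) ≤ Real.exp (2 * t) := by
    calc Real.cosh (c*t) ≤ Real.exp (c*t) := cosh_le_exp_of_nonneg (by positivity)
    _ ≤ Real.exp (2*t) := Real.exp_le_exp.2 (by nlinarith)
  have h2 : Real.exp (-x * Real.cosh t) ≤ Real.exp (-(x/2 * Real.exp t)) := by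
    apply Real.exp_le_exp.2
    have := cosh_ge_half_exp t
    nlinarith
  calc Real.exp (-x * Real.cosh t) * Real.cosh (c * t)
      ≤ Real.exp (-(x/2 * Real.exp t)) * Real.exp (2*t) := by
        apply mul_le_mul h2 h1 (by positivity) (by positivity)
    _ = Real.exp (2*t - x/2 * Real.exp t) := by rw [← Real.exp_add]; ring_nf
    _ ≤ Real.exp ((3 * Real.log (6/x) - 3) + (-t)) := by
        apply Real.exp_le_exp.2
        have := key_exp_ineq (x := x) (t := t) hx
        linarith
    _ = _ := Real.exp_add _ _

lemma besselK_integrable {x c : ℝ} (hx : 0 < x) (hc : 0 ≤ c) (hc2 : c ≤ 2) :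
    IntegrableOn (fun t => Real.exp (-x * Real.cosh t) * Real.cosh (c * t)) (Ioi 0) := by
  apply Integrable.mono'
    ((exp_neg_integrableOn_Ioi 0 one_pos).const_mul (Real.exp (3 * Real.log (6 / x) - 3)))
  · exact (Continuous.mul (by continuity) (by continuity)).aestronglyMeasurable
  · filter_upwards [ae_restrict_mem measurableSet_Ioi] with t ht
    rw [Real.norm_eq_abs, abs_of_nonneg (by positivity)]
    simpa [neg_mul, one_mul] using besselK_integrand_bound hx hc hc2 (le_of_lt ht)

lemma besselK_integrable' {x : ℝ} (hx : 0 < x) (j : ℕ) (hj : j ≤ 2) :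
    IntegrableOn (fun t => Real.exp (-x * Real.cosh t) * Real.cosh ((j:ℝ) * t)) (Ioi 0) :=
  besselK_integrable hx (by positivity) (by exact_mod_cast hj)

lemma besselK_nonneg (j : ℕ) (x : ℝ) : 0 ≤ besselK j x :=
  setIntegral_nonneg measurableSet_Ioi fun t _ => by positivity

lemma besselK_mono {x : ℝ} (hx : 0 < x) {i j : ℕ} (hij : i ≤ j) (hj : j ≤ 2) :
    besselK i x ≤ besselK j x := by
  apply setIntegral_mono_on (besselK_integrable' hx i (hij.trans hj))
    (besselK_integrable' hx j hj) measurableSet_Ioi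
  intro t ht
  have hmono : Real.cosh ((i:ℝ)*t) ≤ Real.cosh ((j:ℝ)*t) := by
    rw [Real.cosh_le_cosh]
    have ht' : (0:ℝ) ≤ t := le_of_lt ht
    rw [abs_of_nonneg (by positivity), abs_of_nonneg (by positivity)]
    have : (i:ℝ) ≤ (j:ℝ) := by exact_mod_cast hij
    nlinarith
  exact mul_le_mul_of_nonneg_left hmono (by positivity)

lemma aux_integrable {x : ℝ} (hx : 0 < x) :
    IntegrableOn (fun t => x * Real.cosh t * Real.exp (-x * Real.sinh t)) (Ioi 0) := by
  apply Integrable.mono'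
    (((besselK_integrable hx one_pos.le one_le_two).const_mul (x * Real.exp x)))
  · exact (by fun_prop :
      Continuous fun t => x * Real.cosh t * Real.exp (-x * Real.sinh t)).aestronglyMeasurable
  · filter_upwards [ae_restrict_mem measurableSet_Ioi] with t ht
    have ht' : (0:ℝ) ≤ t := le_of_lt ht
    rw [Real.norm_eq_abs, abs_of_nonneg (by positivity)]
    have hcs : Real.cosh t - Real.sinh t ≤ 1 := by
      rw [Real.cosh_sub_sinh]
      exact Real.exp_le_one_iff.2 (by linarith)
    have hkey : Real.exp (-x * Real.sinh t) ≤ Real.exp x * Real.exp (-x * Real.cosh t) := by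
      rw [← Real.exp_add]
      apply Real.exp_le_exp.2
      nlinarith
    have hch : 0 < Real.cosh t := Real.cosh_pos t
    calc x * Real.cosh t * Real.exp (-x * Real.sinh t)
        ≤ x * Real.cosh t * (Real.exp x * Real.exp (-x * Real.cosh t)) := by
          apply mul_le_mul_of_nonneg_left hkey (by positivity)
      _ = x * Real.exp x * (Real.exp (-x * Real.cosh t) * Real.cosh (1 * t)) := by
          rw [one_mul]; ring

lemma aux_integral {x : ℝ} (hx : 0 < x) :
    ∫ t in Ioi (0:ℝ), x * Real.cosh t * Real.exp (-x * Real.sinh t) = 1 := by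
  have hderiv : ∀ t ∈ Ici (0:ℝ),
      HasDerivAt (fun t => -Real.exp (-x * Real.sinh t))
        (x * Real.cosh t * Real.exp (-x * Real.sinh t)) t := by
    intro t _
    have h1 : HasDerivAt (fun t => -x * Real.sinh t) (-x * Real.cosh t) t :=
      (Real.hasDerivAt_sinh t).const_mul (-x)
    have h2 := h1.exp
    exact h2.neg.congr_deriv (by ring)
  have htend : Tendsto (fun t => -Real.exp (-x * Real.sinh t)) atTop (𝓝 0) := by
    rw [show (0:ℝ) = -0 by ring]
    apply Tendsto.neg
    apply Real.tendsto_exp_atBot.comp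
    apply Tendsto.const_mul_atTop_of_neg (by linarith : -x < 0)
    apply tendsto_atTop_mono' _ _ (tendsto_atTop_add_const_right _ (-(1:ℝ)/2)
      ((tendsto_exp_atTop).const_mul_atTop (by norm_num : (0:ℝ) < 1/2)))
    filter_upwards [eventually_ge_atTop (0:ℝ)] with t ht
    have := Real.exp_le_one_iff.2 (by linarith : -t ≤ 0)
    rw [Real.sinh_eq]
    linarith
  have h := integral_Ioi_of_hasDerivAt_of_tendsto' hderiv (aux_integrable hx) htend
  rw [h]
  simp

lemma besselK_one_lb {x : ℝ} (hx : 0 < x) : Real.exp (-x) ≤ x * besselK 1 x := by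
  have h1 : x * besselK 1 x
      = ∫ t in Ioi (0:ℝ), x * (Real.exp (-x * Real.cosh t) * Real.cosh ((1:ℕ) * t)) := by
    rw [besselK, ← integral_const_mul]
  rw [h1]
  have h2 : Real.exp (-x) = ∫ t in Ioi (0:ℝ),
      Real.exp (-x) * (x * Real.cosh t * Real.exp (-x * Real.sinh t)) := by
    rw [integral_const_mul, aux_integral hx, mul_one]
  rw [h2]
  apply setIntegral_mono_on ((aux_integrable hx).const_mul _)
  · exact (besselK_integrable hx (by norm_num) (by norm_num : ((1:ℕ):ℝ) ≤ 2)).const_mul x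
  · exact measurableSet_Ioi
  intro t ht
  have ht' : (0:ℝ) ≤ t := le_of_lt ht
  have hcs : Real.cosh t - Real.sinh t ≤ 1 := by
    rw [Real.cosh_sub_sinh]; exact Real.exp_le_one_iff.2 (by linarith)
  have hkey : Real.exp (-x) * Real.exp (-x * Real.sinh t) ≤ Real.exp (-x * Real.cosh t) := by
    rw [← Real.exp_add]; apply Real.exp_le_exp.2; nlinarith
  have hch : 0 < Real.cosh t := Real.cosh_pos t
  calc Real.exp (-x) * (x * Real.cosh t * Real.exp (-x * Real.sinh t))
      = x * Real.cosh t * (Real.exp (-x) * Real.exp (-x * Real.sinh t)) := by ring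
    _ ≤ x * Real.cosh t * Real.exp (-x * Real.cosh t) := by
        apply mul_le_mul_of_nonneg_left hkey (by positivity)
    _ = x * (Real.exp (-x * Real.cosh t) * Real.cosh ((1:ℕ) * t)) := by
        push_cast; rw [one_mul]; ring

lemma besselK_zero_ub {x : ℝ} (hx : 0 < x) (hx1 : x ≤ 1) :
    besselK 0 x ≤ Real.log 2 + 1 - Real.log x := by
  set T := Real.log (2 / x) with hT
  have h2x : (1:ℝ) < 2 / x := by
    rw [lt_div_iff₀ hx]; linarith
  have hT0 : 0 < T := Real.log_pos h2x
  have hexpT : Real.exp T = 2 / x := Real.exp_log (by positivity)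
  have hint : IntegrableOn (fun t => Real.exp (-x * Real.cosh t)) (Ioi 0) := by
    have := besselK_integrable hx le_rfl (by norm_num : (0:ℝ) ≤ 2)
    simpa using this
  have hK0 : besselK 0 x = ∫ t in Ioi (0:ℝ), Real.exp (-x * Real.cosh t) := by
    rw [besselK]; norm_num
  have hsplit : Ioc (0:ℝ) T ∪ Ioi T = Ioi 0 := Ioc_union_Ioi_eq_Ioi hT0.le
  have hdisj : Disjoint (Ioc (0:ℝ) T) (Ioi T) := Ioc_disjoint_Ioi le_rfl
  have hi1 : IntegrableOn (fun t => Real.exp (-x * Real.cosh t)) (Ioc 0 T) :=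
    hint.mono_set Ioc_subset_Ioi_self
  have hi2 : IntegrableOn (fun t => Real.exp (-x * Real.cosh t)) (Ioi T) :=
    hint.mono_set (Ioi_subset_Ioi hT0.le)
  have hKsplit : besselK 0 x = (∫ t in Ioc (0:ℝ) T, Real.exp (-x * Real.cosh t))
      + ∫ t in Ioi T, Real.exp (-x * Real.cosh t) := by
    rw [hK0, ← hsplit, setIntegral_union hdisj measurableSet_Ioi hi1 hi2]
  have hb1 : (∫ t in Ioc (0:ℝ) T, Real.exp (-x * Real.cosh t)) ≤ T := by
    have h : (∫ t in Ioc (0:ℝ) T, Real.exp (-x * Real.cosh t)) ≤ ∫ _t in Ioc (0:ℝ) T, (1:ℝ) := by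
      apply setIntegral_mono_on hi1 (integrableOn_const measure_Ioc_lt_top.ne)
        measurableSet_Ioc
      intro t _
      apply Real.exp_le_one_iff.2
      nlinarith [Real.cosh_pos t]
    simpa [Real.volume_Ioc, ENNReal.toReal_ofReal hT0.le, hT0.le] using h
  have hb2 : (∫ t in Ioi T, Real.exp (-x * Real.cosh t)) ≤ 1 := by
    have hmono : (∫ t in Ioi T, Real.exp (-x * Real.cosh t))
        ≤ ∫ t in Ioi T, Real.exp (T - 1) * Real.exp (-t) := by
      apply setIntegral_mono_on hi2 _ measurableSet_Ioi
      · intro t ht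
        rw [← Real.exp_add]
        apply Real.exp_le_exp.2
        have h1 : Real.exp t / 2 ≤ Real.cosh t := by
          rw [Real.cosh_eq]; have := (Real.exp_pos (-t)).le; linarith
        have h2 : 1 + (t - T) ≤ Real.exp (t - T) := by
          have := Real.add_one_le_exp (t - T); linarith
        have h3 : Real.exp (t - T) = x / 2 * Real.exp t := by
          rw [Real.exp_sub, hexpT]; field_simp
        nlinarith
      · have h := (exp_neg_integrableOn_Ioi T one_pos).const_mul (Real.exp (T-1))
        apply h.congr
        filter_upwards with t
        simp
    have hval : (∫ t in Ioi T, Real.exp (T - 1) * Real.exp (-t)) = Real.exp (-1) := by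
      rw [integral_const_mul, integral_exp_neg_Ioi, ← Real.exp_add]
      ring_nf
    rw [hval] at hmono
    have : Real.exp (-1) ≤ 1 := Real.exp_le_one_iff.2 (by norm_num)
    linarith
  have hTlog : T = Real.log 2 - Real.log x := by
    rw [hT, Real.log_div (by norm_num) (ne_of_gt hx)]
  linarith [hKsplit.le, hKsplit.ge]

end BesselLemmas

section AlgebraLemmas
open Real
set_option maxHeartbeats 1000000

lemma exp_facts {x : ℝ} (hx : 0 < x) (hx1 : x < 1) :
    Real.exp x ≤ 3 ∧ Real.exp x - 1 ≤ 3 * x := by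
  have h3 : Real.exp x ≤ 3 := by
    calc Real.exp x ≤ Real.exp 1 := Real.exp_le_exp.2 hx1.le
    _ ≤ 3 := by linarith [Real.exp_one_lt_d9]
  refine ⟨h3, ?_⟩
  have h := Real.add_one_le_exp (-x)
  have he : Real.exp (-x) * Real.exp x = 1 := by rw [← Real.exp_add]; simp
  nlinarith [Real.exp_pos x]

lemma mt_bound {x L K0 K1 : ℝ} (hx : 0 < x) (hx1 : x < 1)
    (hK0 : 0 ≤ K0) (hK01 : K0 ≤ K1)
    (hK1x : Real.exp (-x) ≤ x * K1)
    (hxK0 : x * K0 ≤ 3) (hK0L : K0 ≤ L) :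
    2*K0*K1 + x * (K0^2 - K1^2) ≤ (L/(2*π) + 2) * (4*π*x*K1^2) := by
  obtain ⟨h3, hex1⟩ := exp_facts hx hx1
  have hpi : (3:ℝ) < π := Real.pi_gt_three
  have hK1 : 0 < K1 := by nlinarith [Real.exp_pos (-x)]
  have hE : 1 ≤ x * K1 * Real.exp x := by
    have he : Real.exp (-x) * Real.exp x = 1 := by rw [← Real.exp_add]; simp
    nlinarith [Real.exp_pos x]
  have hEK : Real.exp x * K0 ≤ L + 9 := by nlinarith [Real.exp_pos x]
  have h2 : 2*K0*K1 ≤ 2*x*K1^2*(Real.exp x * K0) := by nlinarith [mul_nonneg hK0 hK1.le]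
  have hxK1 : (0:ℝ) ≤ x * K1^2 := by positivity
  have h2b : 2*x*K1^2*(Real.exp x * K0) ≤ 2*x*K1^2*(L+9) := by nlinarith
  have hsq : x*K0^2 ≤ x*K1^2 := by
    have h := mul_self_le_mul_self hK0 hK01
    nlinarith
  have hpi8 : 18*(x*K1^2) ≤ 8*π*(x*K1^2) := by nlinarith
  have hrw : (L/(2*π) + 2) * (4*π*x*K1^2) = 2*x*K1^2*L + 8*π*(x*K1^2) := by
    field_simp; ring
  rw [hrw]
  have hexpand : x*(K0^2 - K1^2) = x*K0^2 - x*K1^2 := by ring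
  have h2c : 2*x*K1^2*(L+9) = 2*x*K1^2*L + 18*(x*K1^2) := by ring
  linarith

lemma mn_bound {x L K0 K1 K2 : ℝ} (hx : 0 < x) (hx1 : x < 1)
    (hK0 : 0 ≤ K0) (hK01 : K0 ≤ K1) (hK12 : K1 ≤ K2)
    (hK1x : Real.exp (-x) ≤ x * K1)
    (hK0u : K0 ≤ Real.log 2 + 1 - Real.log x)
    (hxK0 : x * K0 ≤ 3) (hK0L : K0 ≤ L) (hL : 0 ≤ L) :
    2*K0*K1*K2 + x * (K1^2*(K0+K2) - 2*K0^2*K2)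
      ≤ (L/(4*π) + 5) * (2*π*x*(4*K1^2*K2 + x*K1*(K1^2 - K0*K2))) := by
  obtain ⟨h3, hex1⟩ := exp_facts hx hx1
  have hpi : (3:ℝ) < π := Real.pi_gt_three
  have hK1 : 0 < K1 := by nlinarith [Real.exp_pos (-x)]
  have hK2 : 0 < K2 := lt_of_lt_of_le hK1 hK12
  have hK02 : K0 ≤ K2 := hK01.trans hK12
  have hxK0K1 : x * K0 ≤ K1 := by nlinarith
  have hG : 3 * K1 ≤ 4 * K1 - x * K0 := by linarith
  set D := 4*K1^2*K2 + x*K1*(K1^2 - K0*K2) with hD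
  clear_value D
  have hDge : K1*K2*(4*K1 - x*K0) ≤ D := by
    have h : D - K1*K2*(4*K1 - x*K0) = x*K1^3 := by rw [hD]; ring
    nlinarith [pow_pos hK1 3]
  have hd3 : 3*K1^2*K2 ≤ D := by
    have := mul_le_mul_of_nonneg_left hG (by positivity : (0:ℝ) ≤ K1*K2)
    nlinarith
  have hDpos : 0 < D := by nlinarith [mul_pos (mul_pos hK1 hK2) (by linarith : 0 < 4*K1 - x*K0)]
  have hB : 0 ≤ L/(4*π) + 5 := by positivity
  have hNub : 2*K0*K1*K2 + x * (K1^2*(K0+K2) - 2*K0^2*K2)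
      ≤ 2*K0*K1*K2 + x*K1^2*K0 + x*K1^2*K2 := by
    nlinarith [mul_nonneg (mul_nonneg hx.le (mul_nonneg hK0 hK0)) hK2.le]
  rcases le_or_gt x (1/2) with hhalf | hhalf
  · have h47 : (1:ℝ)/2 ≤ 4 - 7*x := by linarith
    have h47p : (0:ℝ) < 4 - 7*x := by linarith
    have hemx : 1 - x ≤ Real.exp (-x) := by linarith [Real.add_one_le_exp (-x)]
    have hxG : 4 - 7*x ≤ x*(4*K1 - x*K0) := by nlinarith
    set A := x*K1*K2*(4*K1 - x*K0) with hA
    clear_value A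
    have hApos : 0 < A := by
      rw [hA]; apply mul_pos (mul_pos (mul_pos hx hK1) hK2); linarith
    have ha : 2*K0*K1*K2 ≤ A * (2*K0/(4-7*x)) := by
      rw [hA, ← mul_div_assoc, le_div_iff₀ h47p]
      have hm := mul_le_mul_of_nonneg_left hxG
        (by positivity : (0:ℝ) ≤ 2*K0*K1*K2)
      nlinarith
    have hb1 : 3*(x*K1^2*K2) ≤ A := by
      rw [hA]
      have := mul_le_mul_of_nonneg_left hG (by positivity : (0:ℝ) ≤ x*K1*K2)
      nlinarith
    have hb2 : x*K1^2*K0 ≤ x*K1^2*K2 := by nlinarith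
    have hb : x*K1^2*K0 + x*K1^2*K2 ≤ A * (2/3) := by linarith
    have hcoef : 2*K0/(4-7*x) + 2/3 ≤ L/2 + 10*π := by
      have h1 : 2*K0/(4-7*x) ≤ K0/2 + 22 := by
        rw [div_le_iff₀ h47p]
        nlinarith
      linarith
    have step2 : A * (2*K0/(4-7*x) + 2/3) ≤ A * (L/2 + 10*π) :=
      mul_le_mul_of_nonneg_left hcoef hApos.le
    have step3 : A * (L/2 + 10*π) ≤ (L/(4*π) + 5) * (2*π*x*D) := by
      have hh : (L/(4*π) + 5) * (2*π*x*(K1*K2*(4*K1-x*K0))) = A * (L/2 + 10*π) := by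
        rw [hA]; field_simp; ring
      rw [← hh]
      apply mul_le_mul_of_nonneg_left _ hB
      exact mul_le_mul_of_nonneg_left hDge (by positivity)
    have hmul : A * (2*K0/(4-7*x)) + A * (2/3) = A * (2*K0/(4-7*x) + 2/3) := by ring
    linarith
  · have hK03 : K0 ≤ 3 := by
      have hlx : Real.log (1/2) ≤ Real.log x := Real.log_le_log (by norm_num) (by linarith)
      have h12 : Real.log (1/2) = -Real.log 2 := by rw [one_div, Real.log_inv]
      rw [h12] at hlx
      have hl2 : Real.log 2 < 0.6931471808 := Real.log_two_lt_d9
      linarith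
    have hE : 1 ≤ 3 * (x * K1) := by
      have hein : (1:ℝ)/3 ≤ Real.exp (-x) := by
        have h' : Real.exp (-1) ≤ Real.exp (-x) := Real.exp_le_exp.2 (by linarith)
        have h1 : Real.exp (-1) * Real.exp 1 = 1 := by rw [← Real.exp_add]; simp
        nlinarith [Real.exp_pos (-1), Real.exp_one_lt_d9, Real.exp_pos 1]
      linarith
    have h1 : 2*K0*K1*K2 ≤ 6*(x*K1^2*K2*K0) := by
      have := mul_le_mul_of_nonneg_left hE (by positivity : (0:ℝ) ≤ 2*K0*K1*K2)
      nlinarith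
    have h1b : 6*(x*K1^2*K2*K0) ≤ 18*(x*K1^2*K2) := by
      have := mul_le_mul_of_nonneg_left hK03 (by positivity : (0:ℝ) ≤ 6*(x*K1^2*K2))
      nlinarith
    have h1c : x*K1^2*K0 ≤ x*K1^2*K2 := by nlinarith
    have hNub2 : 2*K0*K1*K2 + x*K1^2*K0 + x*K1^2*K2 ≤ 20*(x*K1^2*K2) := by linarith
    have hrhs : 20*(x*K1^2*K2) ≤ (L/(4*π) + 5) * (2*π*x*D) := by
      have p1 : (0:ℝ) ≤ L/(4*π)*(2*π*x*D) := by positivity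
      have p2 : 2*π*x*(3*K1^2*K2) ≤ 2*π*x*D := mul_le_mul_of_nonneg_left hd3 (by positivity)
      have p3 : 20*(x*K1^2*K2) ≤ 5*(2*π*x*(3*K1^2*K2)) := by
        nlinarith [mul_pos (mul_pos hx (mul_pos hK1 hK1)) hK2]
      have p4 : (L/(4*π) + 5) * (2*π*x*D) = L/(4*π)*(2*π*x*D) + 5*(2*π*x*D) := by ring
      linarith
    linarith

end AlgebraLemmas


set_option maxHeartbeats 1000000

/-- **Low wavenumber refinement** (Lemma 2.3). -/
theorem low_wavenumber_refinement :
    ∃ c : ℝ, 0 < c ∧ ∀ ε ∈ Set.Ioo (0:ℝ) 1,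
      (∀ k : ℤ, k ≠ 0 → |(k:ℝ)| < 1 / (2 * Real.pi * ε) →
        mt ε k - logn ε / (2 * Real.pi) ≤ c * (1 + |Real.log (abs (k:ℝ))|) ∧
        mn ε k - logn ε / (4 * Real.pi) ≤ c * (1 + |Real.log (abs (k:ℝ))|)) ∧
      mt ε 0 - logn ε / (2 * Real.pi) = 0 ∧ mn ε 0 - logn ε / (4 * Real.pi) = 0 := by
  classical
  refine ⟨10, by norm_num, ?_⟩
  rintro ε ⟨hε0, hε1⟩
  refine ⟨?_, by simp [mt], by simp [mn]⟩
  intro k hk hklt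
  have hpi : (0:ℝ) < Real.pi := Real.pi_pos
  have hpi3 : (3:ℝ) < Real.pi := Real.pi_gt_three
  have hk1 : (1:ℝ) ≤ |(k:ℝ)| := by
    have h := Int.one_le_abs hk
    calc (1:ℝ) = ((1:ℤ):ℝ) := by norm_num
    _ ≤ ((|k|:ℤ):ℝ) := by exact_mod_cast h
    _ = |(k:ℝ)| := by push_cast; ring
  have hkpos : (0:ℝ) < |(k:ℝ)| := by linarith
  set x : ℝ := 2 * Real.pi * ε * |(k:ℝ)| with hxdef
  have hx : 0 < x := by rw [hxdef]; positivity
  have hx1 : x < 1 := by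
    rw [lt_div_iff₀ (by positivity : (0:ℝ) < 2 * Real.pi * ε)] at hklt
    calc x = |(k:ℝ)| * (2 * Real.pi * ε) := by rw [hxdef]; ring
    _ < 1 := hklt
  have hL0 : 0 < logn ε := by
    rw [logn]; linarith [Real.log_neg hε0 hε1]
  have hK0nn : 0 ≤ besselK 0 x := besselK_nonneg 0 x
  have hK01 : besselK 0 x ≤ besselK 1 x := besselK_mono hx (by norm_num) (by norm_num)
  have hK12 : besselK 1 x ≤ besselK 2 x := besselK_mono hx (by norm_num) (by norm_num)
  have hK1x : Real.exp (-x) ≤ x * besselK 1 x := besselK_one_lb hx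
  have hK0u : besselK 0 x ≤ Real.log 2 + 1 - Real.log x := besselK_zero_ub hx hx1.le
  have hK1pos : 0 < besselK 1 x := by nlinarith [Real.exp_pos (-x)]
  have hl2 : Real.log 2 < 0.6931471808 := Real.log_two_lt_d9
  have hl2nn : (0:ℝ) ≤ Real.log 2 := Real.log_nonneg one_le_two
  have hxK0 : x * besselK 0 x ≤ 3 := by
    have hlog : -(x * Real.log x) ≤ 1 - x := by
      have h := Real.log_le_sub_one_of_pos (show (0:ℝ) < x⁻¹ by positivity)
      rw [Real.log_inv] at h
      have h2 := mul_le_mul_of_nonneg_left h hx.le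
      have h3 : x * x⁻¹ = 1 := mul_inv_cancel₀ hx.ne'
      nlinarith
    have hm := mul_le_mul_of_nonneg_left hK0u hx.le
    nlinarith [mul_nonneg (by linarith : (0:ℝ) ≤ 1 - x) hl2nn]
  have hK0L : besselK 0 x ≤ logn ε := by
    have hlogx : Real.log x = Real.log 2 + Real.log Real.pi + Real.log ε + Real.log |(k:ℝ)| := by
      rw [hxdef, Real.log_mul (by positivity) (ne_of_gt hkpos),
        Real.log_mul (by positivity) hε0.ne',
        Real.log_mul (by norm_num) hpi.ne']
    have hlogpi : 1 ≤ Real.log Real.pi := by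
      rw [Real.le_log_iff_exp_le hpi]
      linarith [Real.exp_one_lt_d9]
    have hlogk : 0 ≤ Real.log |(k:ℝ)| := Real.log_nonneg hk1
    rw [logn]
    linarith
  have hrhs10 : (2:ℝ) ≤ 10 * (1 + |Real.log (abs (k:ℝ))|) := by
    nlinarith [abs_nonneg (Real.log (abs (k:ℝ)))]
  constructor
  · -- tangential
    have hmt : mt ε k = (2 * besselK 0 x * besselK 1 x
        + x * ((besselK 0 x)^2 - (besselK 1 x)^2))
        / (8 * Real.pi^2 * ε * |(k:ℝ)| * (besselK 1 x)^2) := by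
      rw [hxdef]
      show mt ε k = _
      unfold mt
      rw [if_neg hk]
    have hden : 8 * Real.pi^2 * ε * |(k:ℝ)| * (besselK 1 x)^2
        = 4 * Real.pi * x * (besselK 1 x)^2 := by
      rw [hxdef]; ring
    have hbd := mt_bound hx hx1 hK0nn hK01 hK1x hxK0 hK0L
    have hdenpos : (0:ℝ) < 4 * Real.pi * x * (besselK 1 x)^2 := by positivity
    have hfrac : mt ε k ≤ logn ε / (2 * Real.pi) + 2 := by
      rw [hmt, hden, div_le_iff₀ hdenpos]
      exact hbd
    linarith
  · -- normal
    have hmn : mn ε k = (2 * besselK 0 x * besselK 1 x * besselK 2 x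
        + x * ((besselK 1 x)^2 * (besselK 0 x + besselK 2 x)
          - 2 * (besselK 0 x)^2 * besselK 2 x))
        / (4 * Real.pi^2 * ε * |(k:ℝ)|
          * (4 * (besselK 1 x)^2 * besselK 2 x
            + x * besselK 1 x * ((besselK 1 x)^2 - besselK 0 x * besselK 2 x))) := by
      rw [hxdef]
      show mn ε k = _
      unfold mn
      rw [if_neg hk]
    have hbd := mn_bound hx hx1 hK0nn hK01 hK12 hK1x hK0u hxK0 hK0L hL0.le
    have hK2pos : 0 < besselK 2 x := lt_of_lt_of_le hK1pos hK12
    have hxK0K1 : x * besselK 0 x ≤ besselK 1 x := by nlinarith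
    have hG : 0 < 4 * besselK 1 x - x * besselK 0 x := by linarith
    have hDpos : 0 < 4 * (besselK 1 x)^2 * besselK 2 x
        + x * besselK 1 x * ((besselK 1 x)^2 - besselK 0 x * besselK 2 x) := by
      have e1 : 4 * (besselK 1 x)^2 * besselK 2 x
          + x * besselK 1 x * ((besselK 1 x)^2 - besselK 0 x * besselK 2 x)
          = besselK 1 x * besselK 2 x * (4 * besselK 1 x - x * besselK 0 x)
            + x * (besselK 1 x)^3 := by ring
      rw [e1]
      exact add_pos (mul_pos (mul_pos hK1pos hK2pos) hG) (by positivity)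
    have hden : 4 * Real.pi^2 * ε * |(k:ℝ)|
        * (4 * (besselK 1 x)^2 * besselK 2 x
          + x * besselK 1 x * ((besselK 1 x)^2 - besselK 0 x * besselK 2 x))
        = 2 * Real.pi * x * (4 * (besselK 1 x)^2 * besselK 2 x
          + x * besselK 1 x * ((besselK 1 x)^2 - besselK 0 x * besselK 2 x)) := by
      rw [hxdef]; ring
    have hdenpos : (0:ℝ) < 2 * Real.pi * x * (4 * (besselK 1 x)^2 * besselK 2 x
        + x * besselK 1 x * ((besselK 1 x)^2 - besselK 0 x * besselK 2 x)) := by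
      positivity
    have hfrac : mn ε k ≤ logn ε / (4 * Real.pi) + 5 := by
      rw [hmn, hden, div_le_iff₀ hdenpos]
      exact hbd
    have hrhs10' : (5:ℝ) ≤ 10 * (1 + |Real.log (abs (k:ℝ))|) := by
      nlinarith [abs_nonneg (Real.log (abs (k:ℝ)))]
    linarith

end Filament
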